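/- arXiv:2509.24612 — 2 statements merged into one kernel-verified Lean document; each statement's English description precedes it below -/
import Mathlib

section
/- Fix a real k > −1. If r > 0 and J_{k+1}(s) ≠ 0 for every s in the half-open interval (0, r] (i.e. r is smaller than the first positive zero of J_{k+1}), then r·J_k(r)/J_{k+1}(r) < 2(k+1). -/
open Real

/-- Bessel function of the first kind of real order `k`, defined by its power series
(valid for `r > 0`, using real powers). -/
noncomputable def besselJ (k r : ℝ) : ℝ :=
  ∑' m : ℕ, ((-1 : ℝ) ^ m / (m.factorial * Real.Gamma (m + k + 1))) * (r / 2) ^ ((2 * m : ℝ) + k)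

noncomputable def aa (ν : ℝ) (m : ℕ) : ℝ :=
  (-1 : ℝ) ^ m / (m.factorial * Real.Gamma (m + ν + 1))

lemma gamma_arg_pos {ν : ℝ} (hν : -1 < ν) (m : ℕ) : 0 < (m : ℝ) + ν + 1 := by
  have : (0:ℝ) ≤ (m:ℝ) := Nat.cast_nonneg m
  linarith

lemma gamma_pos {ν : ℝ} (hν : -1 < ν) (m : ℕ) : 0 < Real.Gamma ((m : ℝ) + ν + 1) :=
  Real.Gamma_pos_of_pos (gamma_arg_pos hν m)

lemma abs_aa {ν : ℝ} (hν : -1 < ν) (m : ℕ) :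
    |aa ν m| = 1 / (m.factorial * Real.Gamma (m + ν + 1)) := by
  have h1 : (0:ℝ) < m.factorial * Real.Gamma (m + ν + 1) :=
    mul_pos (by exact_mod_cast m.factorial_pos) (gamma_pos hν m)
  rw [aa, abs_div, abs_pow, abs_neg, abs_one, one_pow, abs_of_pos h1]

lemma summable_aa {ν : ℝ} (hν : -1 < ν) (x : ℝ) :
    Summable (fun m : ℕ => aa ν m * x ^ m) := by
  apply Summable.of_norm_bounded_eventually_nat (g := fun m => |x| ^ m / m.factorial)
    (Real.summable_pow_div_factorial |x|)
  filter_upwards [Filter.eventually_ge_atTop ⌈1 - ν⌉₊] with m hm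
  have h2 : (2:ℝ) ≤ (m:ℝ) + ν + 1 := by
    have := Nat.ceil_le.mp hm
    linarith
  have hg1 : (1:ℝ) ≤ Real.Gamma ((m:ℝ) + ν + 1) := by
    have := Real.Gamma_strictMonoOn_Ici.monotoneOn (Set.self_mem_Ici)
      (Set.mem_Ici.mpr h2) h2
    rwa [Real.Gamma_two] at this
  have hfac : (1:ℝ) ≤ m.factorial := by exact_mod_cast m.factorial_pos
  rw [norm_mul, norm_pow, Real.norm_eq_abs, Real.norm_eq_abs, abs_aa hν m]
  rw [div_eq_mul_inv (|x|^m), one_div, mul_comm]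
  have hle : (m.factorial : ℝ) ≤ (m.factorial : ℝ) * Real.Gamma ((m:ℝ) + ν + 1) :=
    le_mul_of_one_le_right (by positivity) hg1
  gcongr

noncomputable def gg (ν x : ℝ) : ℝ := ∑' m : ℕ, aa ν m * x ^ m

lemma besselJ_tsum (ν s : ℝ) :
    besselJ ν s = ∑' m : ℕ, aa ν m * (s / 2) ^ ((2 * m : ℝ) + ν) := rfl

lemma rpow_expand {t : ℝ} (ht : 0 < t) (ν : ℝ) (m : ℕ) :
    t ^ ((2 * m : ℝ) + ν) = t ^ ν * (t ^ 2) ^ m := by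
  rw [Real.rpow_add ht, mul_comm]
  congr 1
  rw [← Real.rpow_natCast t 2, ← Real.rpow_natCast _ m, ← Real.rpow_mul ht.le]
  norm_num [mul_comm]

lemma besselJ_eq {ν s : ℝ} (hs : 0 < s) :
    besselJ ν s = (s / 2) ^ ν * gg ν ((s / 2) ^ 2) := by
  rw [besselJ_tsum, gg, ← tsum_mul_left]
  congr 1; ext m
  rw [rpow_expand (by linarith : (0:ℝ) < s/2)]
  ring

lemma gamma_succ {ν : ℝ} (h : 0 < ν) : Real.Gamma (ν + 1) = ν * Real.Gamma ν :=
  Real.Gamma_add_one h.ne'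

lemma aa_step {ν : ℝ} (hν : -1 < ν) (m : ℕ) :
    (ν + 1) * aa (ν + 1) (m + 1) - aa ν (m + 1) = aa (ν + 2) m := by
  unfold aa
  have hfac : ((m+1).factorial : ℝ) = (m + 1) * m.factorial := by
    rw [Nat.factorial_succ]; push_cast; ring
  have hc : ((m+1 : ℕ) : ℝ) = (m : ℝ) + 1 := by push_cast; ring
  have hA : (0:ℝ) < Real.Gamma ((m:ℝ) + ν + 2) := by
    have := gamma_pos (by linarith : (-1:ℝ) < ν + 1) m
    convert this using 2; ring
  have h3 : Real.Gamma ((m:ℝ) + ν + 3) = ((m:ℝ) + ν + 2) * Real.Gamma ((m:ℝ) + ν + 2) := by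
    have := gamma_succ (show (0:ℝ) < (m:ℝ) + ν + 2 by nlinarith [Nat.cast_nonneg (α := ℝ) m])
    convert this using 2 <;> ring
  rw [hc, hfac]
  have e1 : (m:ℝ) + 1 + (ν+1) + 1 = (m:ℝ) + ν + 3 := by ring
  have e2 : (m:ℝ) + 1 + ν + 1 = (m:ℝ) + ν + 2 := by ring
  have e3 : (m:ℝ) + (ν+2) + 1 = (m:ℝ) + ν + 3 := by ring
  rw [e1, e2, e3, h3]
  have hm1 : (0:ℝ) < (m:ℝ) + 1 := by positivity
  have hfp : (0:ℝ) < (m.factorial : ℝ) := by exact_mod_cast m.factorial_pos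
  have hx : (0:ℝ) < (m:ℝ) + ν + 2 := by nlinarith [Nat.cast_nonneg (α := ℝ) m]
  field_simp
  ring

lemma aa_deriv {ν : ℝ} (hν : 0 < ν) (m : ℕ) :
    aa ν m * (2 * (m:ℝ) + 2 * ν) = 2 * aa (ν - 1) m := by
  unfold aa
  have hx : (0:ℝ) < (m:ℝ) + ν := by positivity
  have h1 : Real.Gamma ((m:ℝ) + ν + 1) = ((m:ℝ) + ν) * Real.Gamma ((m:ℝ) + ν) := by
    have := gamma_succ hx; convert this using 2 <;> ring
  have e1 : (m:ℝ) + (ν - 1) + 1 = (m:ℝ) + ν := by ring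
  rw [e1, h1]
  have hfp : (0:ℝ) < (m.factorial : ℝ) := by exact_mod_cast m.factorial_pos
  have hg : (0:ℝ) < Real.Gamma ((m:ℝ) + ν) := Real.Gamma_pos_of_pos hx
  field_simp

lemma gg_identity {ν : ℝ} (hν : -1 < ν) (x : ℝ) :
    (ν + 1) * gg (ν + 1) x - gg ν x = x * gg (ν + 2) x := by
  have s1 : Summable (fun m : ℕ => (ν + 1) * (aa (ν+1) m * x ^ m)) :=
    (summable_aa (by linarith) x).mul_left _
  have s0 : Summable (fun m : ℕ => aa ν m * x ^ m) := summable_aa hν x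
  have s2 : Summable (fun m : ℕ => aa (ν+2) m * x ^ m) := summable_aa (by linarith) x
  have hgg1 : (ν + 1) * gg (ν + 1) x = ∑' m : ℕ, (ν + 1) * (aa (ν+1) m * x ^ m) := by
    rw [gg, tsum_mul_left]
  rw [hgg1, gg, ← Summable.tsum_sub s1 s0]
  have hsum : Summable (fun m : ℕ => (ν + 1) * (aa (ν+1) m * x ^ m) - aa ν m * x ^ m) :=
    s1.sub s0
  rw [Summable.tsum_eq_zero_add hsum]
  have h0 : (ν + 1) * (aa (ν+1) 0 * x ^ 0) - aa ν 0 * x ^ 0 = 0 := by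
    unfold aa
    have e1 : ((0:ℕ):ℝ) + (ν+1) + 1 = (ν + 1) + 1 := by push_cast; ring
    have e2 : ((0:ℕ):ℝ) + ν + 1 = ν + 1 := by push_cast; ring
    rw [e1, e2, gamma_succ (show (0:ℝ) < ν + 1 by linarith)]
    have hg : (0:ℝ) < Real.Gamma (ν + 1) := Real.Gamma_pos_of_pos (by linarith)
    simp only [Nat.factorial, Nat.cast_one, one_mul, pow_zero, mul_one]
    have : (0:ℝ) < ν + 1 := by linarith
    field_simp
    simp
  rw [h0, zero_add]
  have hterm : ∀ m : ℕ, (ν + 1) * (aa (ν+1) (m+1) * x ^ (m+1)) - aa ν (m+1) * x ^ (m+1)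
      = x * (aa (ν+2) m * x ^ m) := by
    intro m
    have := aa_step hν m
    calc (ν + 1) * (aa (ν+1) (m+1) * x ^ (m+1)) - aa ν (m+1) * x ^ (m+1)
        = ((ν + 1) * aa (ν+1) (m+1) - aa ν (m+1)) * x ^ (m+1) := by ring
      _ = aa (ν+2) m * x ^ (m+1) := by rw [this]
      _ = x * (aa (ν+2) m * x ^ m) := by rw [pow_succ]; ring
  rw [tsum_congr hterm, tsum_mul_left, gg]

lemma bessel_rec {ν : ℝ} (hν : -1 < ν) {s : ℝ} (hs : 0 < s) :
    2 * (ν + 1) * besselJ (ν + 1) s = s * besselJ ν s + s * besselJ (ν + 2) s := by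
  have ht : (0:ℝ) < s / 2 := by linarith
  rw [besselJ_eq hs, besselJ_eq hs, besselJ_eq hs]
  have h1 : (s/2) ^ (ν+1) = (s/2) ^ ν * (s/2) := by
    rw [Real.rpow_add ht, Real.rpow_one]
  have h2 : (s/2) ^ (ν+2) = (s/2) ^ ν * (s/2)^(2:ℕ) := by
    rw [Real.rpow_add ht]
    norm_cast
  rw [h1, h2]
  have key := gg_identity hν ((s/2)^2)
  push_cast
  linear_combination (s * (s/2:ℝ) ^ ν) * key

lemma gg_continuousOn {ν : ℝ} (hν : -1 < ν) (T : ℝ) (hT : 0 < T) :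
    ContinuousOn (gg ν) (Set.Icc (-T) T) := by
  apply continuousOn_tsum (u := fun m => ‖aa ν m * T ^ m‖)
  · intro i; exact (continuous_const.mul (continuous_pow i)).continuousOn
  · exact (summable_norm_iff.mpr (summable_aa hν T)).congr (fun m => rfl)
  · intro n x hx
    rw [norm_mul, norm_mul, norm_pow, norm_pow, Real.norm_eq_abs x, Real.norm_eq_abs T]
    have hxT : |x| ≤ |T| := by
      rw [abs_of_pos hT, abs_le]; exact ⟨hx.1, hx.2⟩
    exact mul_le_mul_of_nonneg_left (pow_le_pow_left₀ (abs_nonneg x) hxT n) (norm_nonneg _)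

lemma gg_zero (ν : ℝ) : gg ν 0 = 1 / Real.Gamma (ν + 1) := by
  rw [gg, tsum_eq_single 0]
  · simp [aa, Nat.factorial]
  · intro m hm
    simp [zero_pow hm]

lemma gg_continuousAt {ν : ℝ} (hν : -1 < ν) {y : ℝ} (hy : 0 ≤ y) :
    ContinuousAt (gg ν) y := by
  have hmem : Set.Icc (-(y+1)) (y+1) ∈ nhds y :=
    Icc_mem_nhds (by linarith) (by linarith)
  exact (gg_continuousOn hν (y+1) (by linarith)).continuousAt hmem

lemma besselJ_continuousAt {ν : ℝ} (hν : -1 < ν) {s : ℝ} (hs : 0 < s) :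
    ContinuousAt (besselJ ν) s := by
  have heq : ∀ᶠ t in nhds s, ((t/2) ^ ν * gg ν ((t/2)^2)) = besselJ ν t := by
    filter_upwards [Ioi_mem_nhds hs] with t ht
    exact (besselJ_eq ht).symm
  apply ContinuousAt.congr _ heq
  apply ContinuousAt.mul
  · have h1 : ContinuousAt (fun t : ℝ => t / 2) s := by fun_prop
    exact h1.rpow_const (Or.inl (by positivity))
  · have h2 : ContinuousAt (gg ν) ((s/2)^2) := gg_continuousAt hν (by positivity)
    have hc : ContinuousAt (fun t : ℝ => (t/2)^2) s := by fun_prop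
    exact ContinuousAt.comp (g := gg ν) (f := fun t : ℝ => (t/2)^2) h2 hc

lemma besselJ_pos_near {ν : ℝ} (hν : -1 < ν) :
    ∃ δ > 0, ∀ s : ℝ, 0 < s → s < δ → 0 < besselJ ν s := by
  have h0 : 0 < gg ν 0 := by
    rw [gg_zero]
    have := Real.Gamma_pos_of_pos (show (0:ℝ) < ν + 1 by linarith)
    positivity
  have hev : gg ν ⁻¹' Set.Ioi 0 ∈ nhds (0:ℝ) :=
    (gg_continuousAt hν le_rfl) (Ioi_mem_nhds h0)
  obtain ⟨ε, hε, hball⟩ := Metric.mem_nhds_iff.mp hev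
  refine ⟨2 * Real.sqrt ε, by positivity, fun s hs hsδ => ?_⟩
  have hx : (s/2)^2 < ε := by
    have h1 : s / 2 < Real.sqrt ε := by linarith
    have h2 : (s/2)^2 < Real.sqrt ε ^ 2 := by
      apply pow_lt_pow_left₀ h1 (by linarith) (by norm_num)
    rwa [Real.sq_sqrt hε.le] at h2
  have hmem : (s/2)^2 ∈ Metric.ball (0:ℝ) ε := by
    rw [Metric.mem_ball, Real.dist_eq, sub_zero, abs_of_nonneg (by positivity)]
    exact hx
  have hgg : 0 < gg ν ((s/2)^2) := hball hmem
  rw [besselJ_eq hs]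
  have : (0:ℝ) < (s/2) ^ ν := Real.rpow_pos_of_pos (by linarith) ν
  positivity

lemma summable_bessel_terms {ν : ℝ} (hν : -1 < ν) {s : ℝ} (hs : 0 < s) :
    Summable (fun m : ℕ => aa ν m * (s/2) ^ ((2 * m : ℝ) + ν)) := by
  have h := (summable_aa hν ((s/2)^2)).mul_left ((s/2) ^ ν)
  apply h.congr
  intro m
  rw [rpow_expand (by linarith : (0:ℝ) < s/2)]
  ring

lemma key_pos {ν : ℝ} (hν : 1 < ν) {r : ℝ} (hr : 0 < r)
    (hpos : ∀ s ∈ Set.Ioc (0:ℝ) r, 0 < besselJ (ν - 1) s) : 0 < besselJ ν r := by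
  have hν1 : (-1:ℝ) < ν := by linarith
  have hν1' : (-1:ℝ) < ν - 1 := by linarith
  set R := r + 1 with hR
  have hRpos : (0:ℝ) < R := by rw [hR]; linarith
  set f : ℕ → ℝ → ℝ :=
    fun m t => (aa ν m * (2:ℝ) ^ (-((2*(m:ℝ)) + ν))) * t ^ ((2*(m:ℝ)) + 2*ν) with hf
  set f' : ℕ → ℝ → ℝ :=
    fun m t => (aa ν m * (2:ℝ) ^ (-((2*(m:ℝ)) + ν))) *
      (((2*(m:ℝ)) + 2*ν) * t ^ ((2*(m:ℝ)) + 2*ν - 1)) with hf'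
  have hfequ : ∀ (m : ℕ) (t : ℝ), 0 < t →
      f m t = t ^ ν * (aa ν m * (t/2) ^ ((2*(m:ℝ)) + ν)) := by
    intro m t ht
    have e1 : t ^ ((2*(m:ℝ)) + 2*ν) = t ^ ((2*(m:ℝ)) + ν) * t ^ ν := by
      rw [← Real.rpow_add ht]; ring_nf
    have e2 : ((t/2):ℝ) ^ ((2*(m:ℝ)) + ν)
        = t ^ ((2*(m:ℝ)) + ν) * (2:ℝ) ^ (-((2*(m:ℝ)) + ν)) := by
      rw [Real.div_rpow ht.le (by norm_num : (0:ℝ) ≤ 2),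
        Real.rpow_neg (by norm_num : (0:ℝ) ≤ 2), div_eq_mul_inv]
    rw [hf]; simp only
    rw [e1, e2]; ring
  have hf'equ : ∀ (m : ℕ) (t : ℝ), 0 < t →
      f' m t = t ^ ν * (aa (ν-1) m * (t/2) ^ ((2*(m:ℝ)) + (ν-1))) := by
    intro m t ht
    have e1 : t ^ ((2*(m:ℝ)) + 2*ν - 1) = t ^ ((2*(m:ℝ)) + (ν-1)) * t ^ ν := by
      rw [← Real.rpow_add ht]; ring_nf
    have e2 : ((t/2):ℝ) ^ ((2*(m:ℝ)) + (ν-1))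
        = t ^ ((2*(m:ℝ)) + (ν-1)) * (2:ℝ) ^ (-((2*(m:ℝ)) + (ν-1))) := by
      rw [Real.div_rpow ht.le (by norm_num : (0:ℝ) ≤ 2),
        Real.rpow_neg (by norm_num : (0:ℝ) ≤ 2), div_eq_mul_inv]
    have e3 : (2:ℝ) ^ (-((2*(m:ℝ)) + (ν-1))) = (2:ℝ) ^ (-((2*(m:ℝ)) + ν)) * 2 := by
      rw [show (-((2*(m:ℝ)) + (ν-1))) = (-((2*(m:ℝ)) + ν)) + 1 by ring,
        Real.rpow_add (by norm_num : (0:ℝ) < 2), Real.rpow_one]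
    have hcoef := aa_deriv (show (0:ℝ) < ν by linarith) m
    rw [hf']; simp only
    rw [e1, e2, e3]
    linear_combination ((2:ℝ) ^ (-((2*(m:ℝ)) + ν)) * t ^ ((2*(m:ℝ)) + (ν-1)) * t ^ ν) * hcoef
  have hderiv : ∀ (m : ℕ), ∀ t ∈ Set.Ioo (0:ℝ) R, HasDerivAt (f m) (f' m t) t := by
    intro m t ht
    have h := Real.hasDerivAt_rpow_const (x := t) (p := (2*(m:ℝ)) + 2*ν) (Or.inl (ne_of_gt ht.1))
    exact h.const_mul _
  set u : ℕ → ℝ := fun m => ‖f' m R‖ with hu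
  have hbound : ∀ (m : ℕ), ∀ t ∈ Set.Ioo (0:ℝ) R, ‖f' m t‖ ≤ u m := by
    intro m t ht
    rw [hu]; simp only
    have hp : (0:ℝ) ≤ (2*(m:ℝ)) + 2*ν - 1 := by
      nlinarith [Nat.cast_nonneg (α := ℝ) m]
    have hle : t ^ ((2*(m:ℝ))+2*ν-1) ≤ R ^ ((2*(m:ℝ))+2*ν-1) :=
      Real.rpow_le_rpow ht.1.le ht.2.le hp
    have h2 : (0:ℝ) ≤ (2*(m:ℝ)) + 2*ν := by nlinarith [Nat.cast_nonneg (α := ℝ) m]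
    have key : ∀ z : ℝ, 0 ≤ z → ‖f' m z‖
        = |aa ν m * (2:ℝ)^(-((2*(m:ℝ))+ν))| * (((2*(m:ℝ))+2*ν) * z ^ ((2*(m:ℝ))+2*ν-1)) := by
      intro z hz
      rw [hf']; simp only
      rw [norm_mul, Real.norm_eq_abs, Real.norm_eq_abs,
        abs_of_nonneg (mul_nonneg h2 (Real.rpow_nonneg hz _))]
    rw [key t ht.1.le, key R hRpos.le]
    exact mul_le_mul_of_nonneg_left (mul_le_mul_of_nonneg_left hle h2) (abs_nonneg _)
  have husum : Summable u := by
    have h0 : Summable (fun m : ℕ => R ^ ν * (aa (ν-1) m * (R/2) ^ ((2*(m:ℝ)) + (ν-1)))) :=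
      (summable_bessel_terms hν1' hRpos).mul_left _
    have h1 := summable_norm_iff.mpr h0
    apply h1.congr
    intro m
    rw [hu]; simp only
    rw [hf'equ m R hRpos]
  have hsum_r : Summable (fun m => f m r) := by
    have h0 : Summable (fun m : ℕ => r ^ ν * (aa ν m * (r/2) ^ ((2*(m:ℝ)) + ν))) :=
      (summable_bessel_terms hν1 hr).mul_left _
    apply h0.congr
    intro m
    rw [hfequ m r hr]
  set F : ℝ → ℝ := fun z => ∑' m, f m z with hF
  have hroo : r ∈ Set.Ioo (0:ℝ) R := ⟨hr, by rw [hR]; linarith⟩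
  have hdF : ∀ t ∈ Set.Ioo (0:ℝ) R, HasDerivAt F (∑' m, f' m t) t := fun t ht =>
    hasDerivAt_tsum_of_isPreconnected husum isOpen_Ioo (convex_Ioo _ _).isPreconnected
      hderiv hbound hroo hsum_r ht
  have hDval : ∀ t : ℝ, 0 < t → (∑' m, f' m t) = t ^ ν * besselJ (ν-1) t := by
    intro t ht
    rw [besselJ_tsum, ← tsum_mul_left]
    exact tsum_congr (fun m => hf'equ m t ht)
  have hFval : ∀ t : ℝ, 0 < t → F t = t ^ ν * besselJ ν t := by
    intro t ht
    rw [hF]; simp only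
    rw [besselJ_tsum, ← tsum_mul_left]
    exact tsum_congr (fun m => hfequ m t ht)
  obtain ⟨δ, hδ, hnear⟩ := besselJ_pos_near hν1
  set s₀ := min (δ/2) (r/2) with hs₀
  have hs₀pos : 0 < s₀ := lt_min (by linarith) (by linarith)
  have hs₀r : s₀ < r := lt_of_le_of_lt (min_le_right _ _) (by linarith)
  have hs₀δ : s₀ < δ := lt_of_le_of_lt (min_le_left _ _) (by linarith)
  have hJs₀ : 0 < besselJ ν s₀ := hnear s₀ hs₀pos hs₀δ
  have hsub : Set.Icc s₀ r ⊆ Set.Ioo (0:ℝ) R := fun x hx =>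
    ⟨lt_of_lt_of_le hs₀pos hx.1, lt_of_le_of_lt hx.2 (by rw [hR]; linarith)⟩
  have hmono : StrictMonoOn F (Set.Icc s₀ r) := by
    apply strictMonoOn_of_deriv_pos (convex_Icc _ _)
    · intro x hx
      exact (hdF x (hsub hx)).continuousAt.continuousWithinAt
    · intro x hx
      rw [interior_Icc] at hx
      have hxm : x ∈ Set.Ioo (0:ℝ) R := hsub ⟨hx.1.le, hx.2.le⟩
      rw [(hdF x hxm).deriv, hDval x hxm.1]
      have hbp : 0 < besselJ (ν-1) x := hpos x ⟨hxm.1, hx.2.le⟩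
      have hxp := Real.rpow_pos_of_pos hxm.1 ν
      positivity
  have hlt : F s₀ < F r :=
    hmono ⟨le_refl s₀, hs₀r.le⟩ ⟨hs₀r.le, le_refl r⟩ hs₀r
  have hF0 : 0 < F s₀ := by
    rw [hFval s₀ hs₀pos]
    have := Real.rpow_pos_of_pos hs₀pos ν
    positivity
  have hFr : 0 < F r := lt_trans hF0 hlt
  rw [hFval r hr] at hFr
  have hrp : (0:ℝ) < r ^ ν := Real.rpow_pos_of_pos hr ν
  by_contra hc
  push_neg at hc
  nlinarith

/-- Before the first positive zero of `J_{k+1}`, we have `r J_k(r)/J_{k+1}(r) < 2(k+1)`. -/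
theorem besselJ_ratio_lt_of_lt_first_zero (k : ℝ) (hk : -1 < k) (r : ℝ) (hr : 0 < r)
    (h : ∀ s ∈ Set.Ioc (0 : ℝ) r, besselJ (k + 1) s ≠ 0) :
    r * besselJ k r / besselJ (k + 1) r < 2 * (k + 1) := by
  have hk1 : (-1:ℝ) < k + 1 := by linarith
  obtain ⟨δ, hδ, hnear⟩ := besselJ_pos_near hk1
  set s₁ := min (δ/2) r with hs₁
  have hs₁pos : 0 < s₁ := lt_min (by linarith) hr
  have hs₁r : s₁ ≤ r := min_le_right _ _
  have hs₁δ : s₁ < δ := lt_of_le_of_lt (min_le_left _ _) (by linarith)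
  have hJ1s : 0 < besselJ (k+1) s₁ := hnear s₁ hs₁pos hs₁δ
  have hpos1 : ∀ s ∈ Set.Ioc (0:ℝ) r, 0 < besselJ (k+1) s := by
    intro s hs
    rcases lt_trichotomy (besselJ (k+1) s) 0 with hneg | h0 | hp
    · exfalso
      rcases lt_trichotomy s s₁ with hlt | heq | hgt
      · have hcont : ContinuousOn (besselJ (k+1)) (Set.Icc s s₁) := fun x hx =>
          (besselJ_continuousAt hk1 (lt_of_lt_of_le hs.1 hx.1)).continuousWithinAt
        have hmem : (0:ℝ) ∈ Set.Icc (besselJ (k+1) s) (besselJ (k+1) s₁) :=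
          ⟨hneg.le, hJ1s.le⟩
        obtain ⟨c, hc, hfc⟩ := intermediate_value_Icc hlt.le hcont hmem
        exact h c ⟨lt_of_lt_of_le hs.1 hc.1, le_trans hc.2 hs₁r⟩ hfc
      · rw [heq] at hneg; linarith
      · have hcont : ContinuousOn (besselJ (k+1)) (Set.Icc s₁ s) := fun x hx =>
          (besselJ_continuousAt hk1 (lt_of_lt_of_le hs₁pos hx.1)).continuousWithinAt
        have hmem : (0:ℝ) ∈ Set.Icc (besselJ (k+1) s) (besselJ (k+1) s₁) :=
          ⟨hneg.le, hJ1s.le⟩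
        obtain ⟨c, hc, hfc⟩ := intermediate_value_Icc' hgt.le hcont hmem
        exact h c ⟨lt_of_lt_of_le hs₁pos hc.1, le_trans hc.2 hs.2⟩ hfc
    · exact absurd h0 (h s hs)
    · exact hp
  have hJ1r : 0 < besselJ (k+1) r := hpos1 r ⟨hr, le_refl r⟩
  have hJ2 : 0 < besselJ (k+2) r := by
    apply key_pos (show (1:ℝ) < k+2 by linarith) hr
    intro s hs
    have := hpos1 s hs
    rwa [show k+2-1 = k+1 by ring]
  have hrec := bessel_rec hk hr
  rw [div_lt_iff₀ hJ1r]
  nlinarith [mul_pos hr hJ2]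
end

section
/- Fix a real k > −1 and let F_k(r) := r·J_k(r)/J_{k+1}(r). If z > 0 and J_{k+1}(z) = 0, then F_k(r) tends to −∞ as r tends to z from the left, and F_k(r) tends to +∞ as r tends to z from the right. -/
open Real

open Filter

noncomputable def bc (k : ℝ) (m : ℕ) : ℝ := (-1 : ℝ)^m / (m.factorial * Real.Gamma (m + k + 1))

lemma gamma_arg_pos_s6 {k : ℝ} (hk : -1 < k) (m : ℕ) : 0 < (m : ℝ) + k + 1 := by
  have : (0:ℝ) ≤ m := Nat.cast_nonneg m
  linarith

lemma gammaJ_pos {k : ℝ} (hk : -1 < k) (m : ℕ) : 0 < Real.Gamma ((m : ℝ) + k + 1) :=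
  Real.Gamma_pos_of_pos (gamma_arg_pos_s6 hk m)

lemma abs_bc {k : ℝ} (hk : -1 < k) (m : ℕ) :
    |bc k m| = 1 / (m.factorial * Real.Gamma (m + k + 1)) := by
  have h1 : (0:ℝ) < m.factorial := by exact_mod_cast m.factorial_pos
  have h2 := gammaJ_pos hk m
  rw [bc, abs_div, abs_pow, abs_neg, abs_one, one_pow, abs_of_pos (by positivity)]

lemma bc_ne {k : ℝ} (hk : -1 < k) (m : ℕ) : bc k m ≠ 0 := by
  have h1 : (0:ℝ) < m.factorial := by exact_mod_cast m.factorial_pos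
  have h2 := gammaJ_pos hk m
  have : |bc k m| ≠ 0 := by rw [abs_bc hk]; positivity
  simpa using this

/-- Gamma recurrence in the form we need. -/
lemma gammaJ_succ {k : ℝ} (hk : -1 < k) (m : ℕ) :
    Real.Gamma ((m:ℝ) + k + 2) = ((m:ℝ) + k + 1) * Real.Gamma ((m:ℝ) + k + 1) := by
  have := Real.Gamma_add_one (ne_of_gt (gamma_arg_pos_s6 hk m))
  rw [show (m:ℝ) + k + 2 = (m:ℝ) + k + 1 + 1 by ring, this]

lemma bc_shift {k : ℝ} (hk : -1 < k) (m : ℕ) :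
    ((m:ℝ) + 1) * bc k (m+1) = - bc (k+1) m := by
  have h1 : (0:ℝ) < m.factorial := by exact_mod_cast m.factorial_pos
  have h2 := gammaJ_pos hk m
  have hg : Real.Gamma ((m:ℝ) + 1 + k + 1) = Real.Gamma ((m:ℝ) + (k+1) + 1) := by ring_nf
  rw [bc, bc]
  push_cast [Nat.factorial_succ]
  rw [hg]
  have h3 := gammaJ_pos (by linarith : (-1:ℝ) < k + 1) m
  field_simp
  ring

lemma bc_rec0 {k : ℝ} (hk : -1 < k) : (k+1) * bc (k+1) 0 = bc k 0 := by
  have hne : k + 1 ≠ 0 := by linarith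
  have hG : 0 < Real.Gamma (k+1) := Real.Gamma_pos_of_pos (by linarith)
  rw [bc, bc, show (((0:ℕ)):ℝ) + (k+1) + 1 = (k+1)+1 by push_cast; ring,
    Real.Gamma_add_one hne, show (((0:ℕ)):ℝ) + k + 1 = k+1 by push_cast; ring]
  have : Real.Gamma (k+1) ≠ 0 := ne_of_gt hG
  field_simp

lemma bc_rec_succ {k : ℝ} (hk : -1 < k) (m : ℕ) :
    (k+1) * bc (k+1) (m+1) = bc k (m+1) + bc (k+2) m := by
  have hx : (0:ℝ) ≤ m := Nat.cast_nonneg m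
  have hpos : (0:ℝ) < (m:ℝ) + k + 2 := by linarith
  have hG : 0 < Real.Gamma ((m:ℝ)+k+2) := Real.Gamma_pos_of_pos hpos
  have hrec : Real.Gamma ((m:ℝ)+k+3) = ((m:ℝ)+k+2) * Real.Gamma ((m:ℝ)+k+2) := by
    have := Real.Gamma_add_one (s := (m:ℝ) + k + 2) (ne_of_gt hpos)
    rw [show (m:ℝ)+k+3 = (m:ℝ)+k+2+1 by ring, this]
  have e1 : Real.Gamma (((m+1:ℕ):ℝ) + k + 1) = Real.Gamma ((m:ℝ)+k+2) := by
    congr 1; push_cast; ring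
  have e2 : Real.Gamma (((m+1:ℕ):ℝ) + (k+1) + 1) = ((m:ℝ)+k+2) * Real.Gamma ((m:ℝ)+k+2) := by
    rw [show ((m+1:ℕ):ℝ) + (k+1) + 1 = (m:ℝ)+k+3 by push_cast; ring, hrec]
  have e3 : Real.Gamma ((m:ℝ) + (k+2) + 1) = ((m:ℝ)+k+2) * Real.Gamma ((m:ℝ)+k+2) := by
    rw [show (m:ℝ) + (k+2) + 1 = (m:ℝ)+k+3 by ring, hrec]
  have hfm : (0:ℝ) < m.factorial := by exact_mod_cast m.factorial_pos
  rw [bc, bc, bc, e1, e2, e3]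
  push_cast [Nat.factorial_succ, pow_succ]
  field_simp
  ring

noncomputable def bD (k : ℝ) : ℝ := max (1 / Real.Gamma (k+1)) (1 / Real.Gamma (k+2))

lemma bD_pos {k : ℝ} (hk : -1 < k) : 0 < bD k := by
  have h1 : 0 < Real.Gamma (k+1) := Real.Gamma_pos_of_pos (by linarith)
  exact lt_max_of_lt_left (by positivity)

lemma gammaJ_lower {k : ℝ} (hk : -1 < k) (m : ℕ) :
    Real.Gamma (k+2) ≤ Real.Gamma ((m:ℝ) + k + 2) := by
  induction m with
  | zero => simp
  | succ n ih =>
    have hpos : (0:ℝ) < (n:ℝ) + k + 2 := by have : (0:ℝ) ≤ n := Nat.cast_nonneg n; linarith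
    have hrec : Real.Gamma ((n:ℝ)+k+3) = ((n:ℝ)+k+2) * Real.Gamma ((n:ℝ)+k+2) := by
      have := Real.Gamma_add_one (s := (n:ℝ) + k + 2) (ne_of_gt hpos)
      rw [show (n:ℝ)+k+3 = (n:ℝ)+k+2+1 by ring, this]
    have h1 : (1:ℝ) ≤ (n:ℝ)+k+2 := by have : (0:ℝ) ≤ n := Nat.cast_nonneg n; linarith
    have hG : 0 < Real.Gamma ((n:ℝ)+k+2) := Real.Gamma_pos_of_pos hpos
    calc Real.Gamma (k+2) ≤ Real.Gamma ((n:ℝ)+k+2) := ih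
    _ ≤ ((n:ℝ)+k+2) * Real.Gamma ((n:ℝ)+k+2) := le_mul_of_one_le_left hG.le h1
    _ = Real.Gamma (((n+1:ℕ):ℝ)+k+2) := by rw [← hrec]; congr 1; push_cast; ring

lemma abs_bc_le {k : ℝ} (hk : -1 < k) (m : ℕ) :
    |bc k m| ≤ bD k / m.factorial := by
  have hfm : (0:ℝ) < m.factorial := by exact_mod_cast m.factorial_pos
  rw [abs_bc hk]
  cases m with
  | zero =>
    simp only [Nat.factorial_zero, Nat.cast_one, one_mul, Nat.cast_zero]
    rw [show (0:ℝ) + k + 1 = k + 1 by ring]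
    calc 1 / Real.Gamma (k+1) ≤ bD k := le_max_left _ _
    _ = bD k / 1 := by ring
  | succ n =>
    have hG2 : 0 < Real.Gamma (k+2) := Real.Gamma_pos_of_pos (by linarith)
    have hge : Real.Gamma (k+2) ≤ Real.Gamma (((n+1:ℕ):ℝ) + k + 1) := by
      have := gammaJ_lower hk n
      rw [show ((n+1:ℕ):ℝ) + k + 1 = (n:ℝ)+k+2 by push_cast; ring]
      exact this
    have hfp : (0:ℝ) < ((n+1).factorial : ℝ) := by exact_mod_cast (n+1).factorial_pos
    have hGpos : 0 < Real.Gamma (((n+1:ℕ):ℝ) + k + 1) := lt_of_lt_of_le hG2 hge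
    calc 1 / (((n+1).factorial:ℝ) * Real.Gamma (((n+1:ℕ):ℝ) + k + 1))
        ≤ 1 / (((n+1).factorial:ℝ) * Real.Gamma (k+2)) := by
          apply one_div_le_one_div_of_le (by positivity)
          exact mul_le_mul_of_nonneg_left hge hfp.le
    _ = (1 / Real.Gamma (k+2)) / ((n+1).factorial:ℝ) := by field_simp
    _ ≤ bD k / ((n+1).factorial:ℝ) := by
          exact (div_le_div_iff_of_pos_right hfp).2 (le_max_right _ _)

/-- Master summability: `∑ |bc k m| * (2m + A) * t^m` converges for `t ≥ 0`, `A ≥ 0`. -/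
lemma summable_master {k : ℝ} (hk : -1 < k) (t A : ℝ) (ht : 0 ≤ t) (hA : 0 ≤ A) :
    Summable (fun m : ℕ => |bc k m| * (2*(m:ℝ) + A) * t^m) := by
  have key : ∀ m : ℕ, |bc k m| * (2*(m:ℝ) + A) * t^m ≤ bD k * (2+A) * ((2*t)^m / m.factorial) := by
    intro m
    have hfm : (0:ℝ) < m.factorial := by exact_mod_cast m.factorial_pos
    have h1 : (m:ℝ) ≤ 2^m := by exact_mod_cast (Nat.lt_two_pow_self (n := m)).le
    have h2 : 2*(m:ℝ) + A ≤ (2+A) * 2^m := by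
      have h3 : (1:ℝ) ≤ 2^m := one_le_pow₀ (by norm_num)
      nlinarith
    have h4 : |bc k m| ≤ bD k / m.factorial := abs_bc_le hk m
    have h5 : (0:ℝ) ≤ t^m := pow_nonneg ht m
    have h6 : (0:ℝ) < bD k := bD_pos hk
    calc |bc k m| * (2*(m:ℝ) + A) * t^m ≤ (bD k / m.factorial) * ((2+A) * 2^m) * t^m := by
          apply mul_le_mul_of_nonneg_right _ h5
          apply mul_le_mul h4 h2 (by positivity) (by positivity)
    _ = bD k * (2+A) * ((2*t)^m / m.factorial) := by
          rw [mul_pow]; field_simp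
  apply Summable.of_nonneg_of_le (fun m => by positivity) key
  exact ((Real.summable_pow_div_factorial (2*t)).mul_left _)

noncomputable def bg (k q : ℝ) : ℝ := ∑' m : ℕ, bc k m * q^m

lemma summable_bg {k : ℝ} (hk : -1 < k) (q : ℝ) : Summable (fun m : ℕ => bc k m * q^m) := by
  apply Summable.of_norm
  have := summable_master hk |q| 1 (abs_nonneg q) zero_le_one
  apply Summable.of_nonneg_of_le (fun m => norm_nonneg _) _ this
  intro m
  rw [Real.norm_eq_abs, abs_mul, abs_pow]
  have h1 : (1:ℝ) ≤ 2*(m:ℝ)+1 := by have : (0:ℝ) ≤ m := Nat.cast_nonneg m; linarith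
  nlinarith [abs_nonneg (bc k m), pow_nonneg (abs_nonneg q) m,
    mul_nonneg (abs_nonneg (bc k m)) (pow_nonneg (abs_nonneg q) m)]

lemma hasSum_bg {k : ℝ} (hk : -1 < k) (q : ℝ) :
    HasSum (fun m : ℕ => bc k m * q^m) (bg k q) := (summable_bg hk q).hasSum

/-- Shifted sums: if `g 0 = 0` and `g (m+1) = f m` with `HasSum f S` then `HasSum g S`. -/
lemma hasSum_shift {f g : ℕ → ℝ} {S : ℝ} (h : HasSum f S) (h0 : g 0 = 0)
    (hs : ∀ m, g (m+1) = f m) : HasSum g S := by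
  have hinj : Function.Injective (fun n : ℕ => n + 1) := fun a b hab => by simpa using hab
  have hrange : ∀ x ∉ Set.range (fun n : ℕ => n + 1), g x = 0 := by
    intro x hx
    match x with
    | 0 => exact h0
    | n+1 => exact absurd ⟨n, rfl⟩ hx
  have : HasSum (g ∘ fun n : ℕ => n + 1) S := by
    apply h.congr_fun
    intro m; exact (hs m)
  exact (Function.Injective.hasSum_iff hinj hrange).1 this

lemma hasDerivAt_bg {k : ℝ} (hk : -1 < k) (q : ℝ) :
    HasDerivAt (bg k) (- bg (k+1) q) q := by
  have hk1 : (-1:ℝ) < k + 1 := by linarith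
  set R : ℝ := |q| + 1 with hRdef
  have hR1 : (1:ℝ) ≤ R := by have := abs_nonneg q; simp only [hRdef]; linarith
  have hR0 : (0:ℝ) ≤ R := by linarith
  have hqmem : q ∈ Set.Ioo (-R) R := by
    constructor
    · have := neg_abs_le q; simp only [hRdef]; linarith
    · have := le_abs_self q; simp only [hRdef]; linarith
  have hu : Summable (fun m : ℕ => |bc k m| * (2*(m:ℝ)+1) * R^m) :=
    summable_master hk R 1 hR0 zero_le_one
  have key := hasDerivAt_tsum_of_isPreconnected hu (isOpen_Ioo (a := -R) (b := R))
    (convex_Ioo _ _).isPreconnected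
    (g := fun n x => bc k n * x^n) (g' := fun n x => bc k n * ((n:ℝ) * x^(n-1)))
    (fun n y _ => (hasDerivAt_pow n y).const_mul (bc k n))
    ?_ hqmem (summable_bg hk q) hqmem
  · have hval : (∑' n : ℕ, bc k n * ((n:ℝ) * q^(n-1))) = - bg (k+1) q := by
      have hf : HasSum (fun j : ℕ => -(bc (k+1) j * q^j)) (- bg (k+1) q) := (hasSum_bg hk1 q).neg
      have hs : HasSum (fun n : ℕ => bc k n * ((n:ℝ) * q^(n-1))) (- bg (k+1) q) := by
        apply hasSum_shift hf (by simp)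
        intro m
        have hb := bc_shift hk m
        calc bc k (m+1) * (((m+1:ℕ):ℝ) * q^(m+1-1))
            = (((m:ℝ)+1) * bc k (m+1)) * q^m := by push_cast; ring
        _ = -(bc (k+1) m * q^m) := by rw [hb]; ring
      exact hs.tsum_eq
    rw [hval] at key
    exact key
  · intro n y hy
    have hyR : |y| ≤ R := by
      rw [abs_le]; exact ⟨hy.1.le, hy.2.le⟩
    have h1 : ‖bc k n * ((n:ℝ) * y^(n-1))‖ = |bc k n| * ((n:ℝ) * |y^(n-1)|) := by
      rw [norm_mul, Real.norm_eq_abs, Real.norm_eq_abs, abs_mul, Nat.abs_cast]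
    rw [h1, abs_pow]
    have h2 : |y|^(n-1) ≤ R^n := by
      calc |y|^(n-1) ≤ R^(n-1) := pow_le_pow_left₀ (abs_nonneg y) hyR _
      _ ≤ R^n := pow_le_pow_right₀ hR1 (Nat.sub_le n 1)
    have h3 : (n:ℝ) ≤ 2*(n:ℝ)+1 := by have : (0:ℝ) ≤ n := Nat.cast_nonneg n; linarith
    have h4 : (0:ℝ) ≤ (n:ℝ) := Nat.cast_nonneg n
    calc |bc k n| * ((n:ℝ) * |y|^(n-1)) ≤ |bc k n| * ((2*(n:ℝ)+1) * R^n) := by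
          apply mul_le_mul_of_nonneg_left _ (abs_nonneg _)
          apply mul_le_mul h3 h2 (by positivity) (by positivity)
    _ = |bc k n| * (2*(n:ℝ)+1) * R^n := by ring

lemma bg_rec {k : ℝ} (hk : -1 < k) (q : ℝ) :
    bg k q + q * bg (k+2) q = (k+1) * bg (k+1) q := by
  have hk2 : (-1:ℝ) < k + 2 := by linarith
  have hk1 : (-1:ℝ) < k + 1 := by linarith
  have h2 : HasSum (fun m : ℕ => bc (k+2) m * q^(m+1)) (q * bg (k+2) q) := by
    apply ((hasSum_bg hk2 q).mul_left q).congr_fun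
    intro m; rw [pow_succ]; ring
  have h2' : HasSum (fun m : ℕ => if m = 0 then 0 else bc (k+2) (m-1) * q^m) (q * bg (k+2) q) := by
    apply hasSum_shift h2 (by simp)
    intro m; simp
  have h3 : HasSum (fun m : ℕ => bc k m * q^m + (if m = 0 then 0 else bc (k+2) (m-1) * q^m))
      (bg k q + q * bg (k+2) q) := (hasSum_bg hk q).add h2'
  have h4 : HasSum (fun m : ℕ => (k+1) * (bc (k+1) m * q^m)) ((k+1) * bg (k+1) q) :=
    (hasSum_bg hk1 q).mul_left (k+1)
  have heq : ∀ m : ℕ, bc k m * q^m + (if m = 0 then 0 else bc (k+2) (m-1) * q^m)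
      = (k+1) * (bc (k+1) m * q^m) := by
    intro m
    cases m with
    | zero => rw [← bc_rec0 hk]; simp
    | succ n =>
      simp only [Nat.succ_ne_zero, if_false, Nat.add_sub_cancel]
      rw [show (k+1) * (bc (k+1) (n+1) * q^(n+1)) = ((k+1) * bc (k+1) (n+1)) * q^(n+1) by ring,
        bc_rec_succ hk n]
      ring
  have := (h3.congr_fun (fun m => (heq m).symm))
  exact this.unique h4

lemma bg_zero {k : ℝ} : bg k 0 = bc k 0 := by
  rw [bg]
  rw [tsum_eq_single 0]
  · simp
  · intro m hm
    cases m with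
    | zero => simp at hm
    | succ n => simp [pow_succ]

lemma besselJ_eq_s6 {k r : ℝ} (hr : 0 < r) :
    besselJ k r = (r/2) ^ (k : ℝ) * bg k ((r/2)^2) := by
  have h2 : (0:ℝ) < r/2 := by linarith
  have hterm : ∀ m : ℕ, ((-1 : ℝ) ^ m / (m.factorial * Real.Gamma (m + k + 1)))
      * (r / 2) ^ ((2 * m : ℝ) + k) = (r/2) ^ (k:ℝ) * (bc k m * ((r/2)^2)^m) := by
    intro m
    have : (r/2) ^ ((2 * (m:ℝ)) + k) = (r/2) ^ (k:ℝ) * ((r/2)^2)^m := by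
      rw [Real.rpow_add h2, mul_comm]
      congr 1
      rw [show (2*(m:ℝ)) = ((2*m : ℕ):ℝ) by push_cast; ring, Real.rpow_natCast, pow_mul]
    rw [this, bc]; ring
  rw [besselJ, tsum_congr hterm, tsum_mul_left, bg]

lemma half_rpow_succ {k r : ℝ} (hr : 0 < r) :
    (r/2 : ℝ) ^ (k+1 : ℝ) = (r/2) ^ (k:ℝ) * (r/2) := by
  have h2 : (0:ℝ) < r/2 := by linarith
  rw [Real.rpow_add_one (ne_of_gt h2)]

lemma besselJ_hasDerivAt {k : ℝ} (hk : -1 < k) {r : ℝ} (hr : 0 < r) :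
    HasDerivAt (besselJ k) ((k/r) * besselJ k r - besselJ (k+1) r) r := by
  have h2 : (0:ℝ) < r/2 := by linarith
  set q : ℝ := (r/2)^2 with hq
  have hinner : HasDerivAt (fun x : ℝ => x/2) (1/2 : ℝ) r := (hasDerivAt_id r).div_const 2
  have houter : HasDerivAt (fun y : ℝ => y ^ (k:ℝ)) (k * (r/2) ^ (k-1:ℝ)) (r/2) :=
    Real.hasDerivAt_rpow_const (Or.inl (ne_of_gt h2))
  have h1 : HasDerivAt (fun x : ℝ => (x/2) ^ (k:ℝ)) (k * (r/2) ^ (k-1:ℝ) * (1/2)) r :=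
    by exact HasDerivAt.comp r houter hinner
  have hsq : HasDerivAt (fun x : ℝ => (x/2)^2) (r/2 : ℝ) r := by
    have h' := hinner.fun_pow 2
    norm_num at h'
    exact h'.congr_deriv (by ring)
  have hbgq : HasDerivAt (bg k) (- bg (k+1) q) q := hasDerivAt_bg hk q
  have h2d : HasDerivAt (fun x : ℝ => bg k ((x/2)^2)) ((- bg (k+1) q) * (r/2)) r :=
    by exact HasDerivAt.comp r hbgq hsq
  have hF : HasDerivAt (fun x : ℝ => (x/2) ^ (k:ℝ) * bg k ((x/2)^2))
      ((k * (r/2) ^ (k-1:ℝ) * (1/2)) * bg k q + (r/2) ^ (k:ℝ) * ((- bg (k+1) q) * (r/2))) r :=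
    h1.mul h2d
  have hev : besselJ k =ᶠ[nhds r] (fun x : ℝ => (x/2) ^ (k:ℝ) * bg k ((x/2)^2)) := by
    filter_upwards [isOpen_Ioi.mem_nhds (show r ∈ Set.Ioi (0:ℝ) from hr)] with x hx
    exact besselJ_eq_s6 hx
  have hval : (k * (r/2) ^ (k-1:ℝ) * (1/2)) * bg k q + (r/2) ^ (k:ℝ) * ((- bg (k+1) q) * (r/2))
      = (k/r) * besselJ k r - besselJ (k+1) r := by
    rw [besselJ_eq_s6 hr, besselJ_eq_s6 hr, half_rpow_succ hr, ← hq]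
    have hk1 : (r/2 : ℝ) ^ (k:ℝ) = (r/2) ^ (k-1:ℝ) * (r/2) := by
      rw [← half_rpow_succ hr (k := k-1)]; norm_num
    rw [hk1]
    field_simp
    ring
  rw [← hval]
  exact hF.congr_of_eventuallyEq hev

lemma besselJ_recurrence {k : ℝ} (hk : -1 < k) {r : ℝ} (hr : 0 < r) :
    besselJ k r + besselJ (k+2) r = (2*(k+1)/r) * besselJ (k+1) r := by
  have h2 : (0:ℝ) < r/2 := by linarith
  have e2 : (r/2 : ℝ) ^ (k+2 : ℝ) = (r/2) ^ (k:ℝ) * (r/2)^2 := by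
    rw [show (k+2:ℝ) = (k+1)+1 by ring, half_rpow_succ hr (k := k+1), half_rpow_succ hr, sq]
    ring
  rw [besselJ_eq_s6 hr, besselJ_eq_s6 hr, besselJ_eq_s6 hr, e2, half_rpow_succ hr]
  have := bg_rec hk ((r/2)^2)
  have hrne : r ≠ 0 := ne_of_gt hr
  calc (r/2:ℝ) ^ (k:ℝ) * bg k ((r/2)^2) + (r/2) ^ (k:ℝ) * (r/2)^2 * bg (k+2) ((r/2)^2)
      = (r/2) ^ (k:ℝ) * (bg k ((r/2)^2) + (r/2)^2 * bg (k+2) ((r/2)^2)) := by ring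
  _ = (r/2) ^ (k:ℝ) * ((k+1) * bg (k+1) ((r/2)^2)) := by rw [this]
  _ = 2*(k+1)/r * ((r/2) ^ (k:ℝ) * (r/2) * bg (k+1) ((r/2)^2)) := by field_simp

lemma besselJ_hasDerivAt' {k : ℝ} (hk : -1 < k) {r : ℝ} (hr : 0 < r) :
    HasDerivAt (besselJ (k+1)) (besselJ k r - ((k+1)/r) * besselJ (k+1) r) r := by
  have h := besselJ_hasDerivAt (k := k+1) (by linarith) hr
  have hid := besselJ_recurrence hk hr
  have : (k+1)/r * besselJ (k+1) r - besselJ (k+1+1) r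
      = besselJ k r - ((k+1)/r) * besselJ (k+1) r := by
    have hrne : r ≠ 0 := ne_of_gt hr
    have h22 : besselJ (k+1+1) r = besselJ (k+2) r := by rw [show k+1+1 = k+2 by ring]
    rw [h22]
    have : besselJ (k+2) r = (2*(k+1)/r) * besselJ (k+1) r - besselJ k r := by linarith
    rw [this]; field_simp; ring
  rw [← this]
  exact h

lemma besselJ_pos_near_zero {k : ℝ} (hk : -1 < k) {z : ℝ} (hz : 0 < z) :
    ∃ x : ℝ, 0 < x ∧ x < z ∧ 0 < besselJ k x := by
  have hbgpos : 0 < bg k 0 := by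
    rw [bg_zero, bc]
    have := gammaJ_pos hk 0
    have hf : ((Nat.factorial 0 : ℕ) : ℝ) = 1 := by norm_num
    simp only [pow_zero]
    positivity
  have hcont : ContinuousAt (bg k) 0 := (hasDerivAt_bg hk 0).continuousAt
  have hev : ∀ᶠ q in nhds (0:ℝ), 0 < bg k q := hcont.eventually (eventually_gt_nhds hbgpos)
  obtain ⟨δ, hδ, hball⟩ := Metric.eventually_nhds_iff.1 hev
  set x : ℝ := min (z/2) (Real.sqrt δ / 2) with hxdef
  have hsq : 0 < Real.sqrt δ := Real.sqrt_pos.2 hδ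
  have hx0 : 0 < x := lt_min (by linarith) (by linarith)
  have hxz : x < z := lt_of_le_of_lt (min_le_left _ _) (by linarith)
  refine ⟨x, hx0, hxz, ?_⟩
  have hmem : dist ((x/2)^2) (0:ℝ) < δ := by
    rw [Real.dist_eq, sub_zero, abs_of_nonneg (by positivity)]
    have hxs : x ≤ Real.sqrt δ / 2 := min_le_right _ _
    have h1 : (x/2)^2 ≤ (Real.sqrt δ / 4)^2 := by
      apply pow_le_pow_left₀ (by positivity)
      linarith
    have h2 : (Real.sqrt δ / 4)^2 = δ / 16 := by
      rw [div_pow, Real.sq_sqrt hδ.le]; norm_num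
    linarith
  have := hball hmem
  rw [besselJ_eq_s6 hx0]
  have h2 : (0:ℝ) < x/2 := by linarith
  have : 0 < (x/2 : ℝ) ^ (k:ℝ) := Real.rpow_pos_of_pos h2 k
  positivity

lemma besselJ_nonvanish {k z : ℝ} (hk : -1 < k) (hz : 0 < z)
    (h : besselJ (k+1) z = 0) : besselJ k z ≠ 0 := by
  intro h0
  obtain ⟨x0, hx0, hx0z, hpos⟩ := besselJ_pos_near_zero (k := k+1) (by linarith) hz
  set S : ℝ → ℝ := fun x => (besselJ k x)^2 + (besselJ (k+1) x)^2 with hSdef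
  set S' : ℝ → ℝ := fun x => 2 * besselJ k x * ((k/x) * besselJ k x - besselJ (k+1) x)
      + 2 * besselJ (k+1) x * (besselJ k x - ((k+1)/x) * besselJ (k+1) x) with hS'def
  have hS : ∀ x : ℝ, 0 < x → HasDerivAt S (S' x) x := by
    intro x hx
    have h1 := (besselJ_hasDerivAt hk hx).fun_pow 2
    have h2 := (besselJ_hasDerivAt' hk hx).fun_pow 2
    have := h1.add h2
    refine this.congr_deriv ?_
    simp only [hS'def]
    push_cast
    ring
  set L : ℝ := z - x0 with hLdef
  have hL : 0 < L := by linarith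
  set K : ℝ := (2*|k| + 2*|k+1|) / x0 with hKdef
  have hT : ∀ t : ℝ, t ∈ Set.Icc 0 L → HasDerivAt (fun t => S (z - t)) (-(S' (z - t))) t := by
    intro t ht
    have hzt : 0 < z - t := by
      rcases ht with ⟨h1, h2⟩
      simp only [hLdef] at h2
      linarith
    have hinner : HasDerivAt (fun t : ℝ => z - t) (-1 : ℝ) t := by
      simpa using (hasDerivAt_id t).const_sub z
    have := (hS (z - t) hzt).comp t hinner
    simp only [mul_neg, mul_one] at this; exact this
  have key := norm_le_gronwallBound_of_norm_deriv_right_le (f := fun t => S (z - t))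
    (f' := fun t => -(S' (z - t))) (δ := 0) (K := K) (ε := 0) (a := 0) (b := L)
    (fun t ht => (hT t ht).continuousAt.continuousWithinAt)
    (fun t ht => (hT t (Set.mem_Icc_of_Ico ht)).hasDerivWithinAt)
    (by simp [hSdef, h, h0])
    ?_
  · have := key L (Set.right_mem_Icc.2 hL.le)
    rw [gronwallBound_ε0_δ0] at this
    have hSL : S (z - L) = 0 := by
      have h1 : ‖S (z - L)‖ = |S (z - L)| := rfl
      have h2 : (0:ℝ) ≤ S (z - L) := by positivity
      rw [h1, abs_of_nonneg h2] at this
      linarith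
    simp only [hLdef, sub_sub_cancel] at hSL
    have h3 : (besselJ (k+1) x0)^2 = 0 := by
      have h4 : (0:ℝ) ≤ (besselJ k x0)^2 := sq_nonneg _
      have h5 : (0:ℝ) ≤ (besselJ (k+1) x0)^2 := sq_nonneg _
      simp only [hSdef] at hSL
      linarith
    have := pow_eq_zero_iff (n := 2) (by norm_num) |>.1 h3
    exact absurd this (ne_of_gt hpos)
  · intro t ht
    have hzt1 : x0 < z - t := by
      rcases ht with ⟨h1, h2⟩
      simp only [hLdef] at h2
      linarith
    have hzt : 0 < z - t := lt_trans hx0 hzt1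
    set x := z - t with hxdef
    have hs'eq : S' x = (2*k/x) * (besselJ k x)^2 - (2*(k+1)/x) * (besselJ (k+1) x)^2 := by
      simp only [hS'def]
      field_simp
      ring
    set A : ℝ := (besselJ k x)^2 with hA
    set B : ℝ := (besselJ (k+1) x)^2 with hB
    have hA0 : 0 ≤ A := sq_nonneg _
    have hB0 : 0 ≤ B := sq_nonneg _
    have hd1 : 2*k/x ≤ 2*|k|/x0 := by
      rw [div_le_div_iff₀ hzt hx0]
      nlinarith [le_abs_self k, abs_nonneg k, hzt1.le, hx0]
    have hd1' : -(2*k/x) ≤ 2*|k|/x0 := by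
      rw [neg_div', div_le_div_iff₀ hzt hx0]
      nlinarith [neg_abs_le k, abs_nonneg k, hzt1.le, hx0]
    have hd2 : 2*(k+1)/x ≤ 2*|k+1|/x0 := by
      rw [div_le_div_iff₀ hzt hx0]
      nlinarith [le_abs_self (k+1), abs_nonneg (k+1), hzt1.le, hx0]
    have hd2' : -(2*(k+1)/x) ≤ 2*|k+1|/x0 := by
      rw [neg_div', div_le_div_iff₀ hzt hx0]
      nlinarith [neg_abs_le (k+1), abs_nonneg (k+1), hzt1.le, hx0]
    have u1 : (2*k/x)*A ≤ (2*|k|/x0)*A := mul_le_mul_of_nonneg_right hd1 hA0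
    have u1' : (-(2*k/x))*A ≤ (2*|k|/x0)*A := mul_le_mul_of_nonneg_right hd1' hA0
    have u2 : (2*(k+1)/x)*B ≤ (2*|k+1|/x0)*B := mul_le_mul_of_nonneg_right hd2 hB0
    have u2' : (-(2*(k+1)/x))*B ≤ (2*|k+1|/x0)*B := mul_le_mul_of_nonneg_right hd2' hB0
    have hn1 : 0 ≤ (2*|k|/x0)*B := by positivity
    have hn2 : 0 ≤ (2*|k+1|/x0)*A := by positivity
    have hKexp : K*(A+B) = (2*|k|/x0)*A + (2*|k|/x0)*B + ((2*|k+1|/x0)*A + (2*|k+1|/x0)*B) := by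
      simp only [hKdef]; ring
    have hSx : S x = A + B := rfl
    have hnorm2 : ‖S x‖ = A + B := by
      rw [hSx, Real.norm_eq_abs, abs_of_nonneg (add_nonneg hA0 hB0)]
    show ‖-(S' x)‖ ≤ K * ‖S x‖ + 0
    rw [norm_neg, Real.norm_eq_abs, hnorm2, hs'eq, add_zero, abs_le]
    constructor
    · rw [neg_le, hKexp]; linarith [u1', u2', hn1, hn2]
    · rw [hKexp]; linarith [u1, u2', hn1, hn2]

/-- At each positive zero `z` of `J_{k+1}`, `F_k` tends to `-∞` from the left and to `+∞`
from the right. -/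
theorem besselJ_ratio_tendsto_at_zero (k : ℝ) (hk : -1 < k) (z : ℝ) (hz : 0 < z)
    (h : besselJ (k + 1) z = 0) :
    Filter.Tendsto (fun r => r * besselJ k r / besselJ (k + 1) r)
      (nhdsWithin z (Set.Iio z)) Filter.atBot ∧
    Filter.Tendsto (fun r => r * besselJ k r / besselJ (k + 1) r)
      (nhdsWithin z (Set.Ioi z)) Filter.atTop := by
  set a : ℝ := besselJ k z with ha_def
  have ha : a ≠ 0 := besselJ_nonvanish hk hz h
  have hD : HasDerivAt (besselJ (k+1)) a z := by
    have := besselJ_hasDerivAt' hk hz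
    rw [h] at this
    simpa using this
  have hslope : Filter.Tendsto (slope (besselJ (k+1)) z) (nhdsWithin z {z}ᶜ) (nhds a) :=
    hasDerivAt_iff_tendsto_slope.1 hD
  have hN : Filter.Tendsto (fun r => r * besselJ k r) (nhds z) (nhds (z * a)) := by
    exact (Filter.tendsto_id (x := nhds z)).mul (besselJ_hasDerivAt hk hz).continuousAt
  have hG : Filter.Tendsto (fun r => (r * besselJ k r) / slope (besselJ (k+1)) z r)
      (nhdsWithin z {z}ᶜ) (nhds z) := by
    have := (hN.mono_left nhdsWithin_le_nhds).div hslope ha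
    rwa [mul_div_assoc, div_self ha, mul_one] at this
  have keyeq : ∀ r : ℝ, r ≠ z →
      r * besselJ k r / besselJ (k+1) r
        = ((r * besselJ k r) / slope (besselJ (k+1)) z r) * (r - z)⁻¹ := by
    intro r hr
    have hfr : besselJ (k+1) r = slope (besselJ (k+1)) z r * (r - z) := by
      rw [slope_def_field, h, sub_zero]
      field_simp [sub_ne_zero.2 hr]
    rw [hfr, ← div_div, div_eq_mul_inv]
  constructor
  · have hmono : nhdsWithin z (Set.Iio z) ≤ nhdsWithin z {z}ᶜ :=
      nhdsWithin_mono z (fun x hx => ne_of_lt hx)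
    have h1 : Filter.Tendsto (fun r : ℝ => z - r) (nhdsWithin z (Set.Iio z))
        (nhdsWithin 0 (Set.Ioi 0)) := by
      apply tendsto_nhdsWithin_of_tendsto_nhds_of_eventually_within
      · have : Filter.Tendsto (fun r : ℝ => z - r) (nhds z) (nhds (z - z)) :=
          (continuous_const.sub continuous_id).tendsto z
        rw [sub_self] at this
        exact this.mono_left nhdsWithin_le_nhds
      · filter_upwards [self_mem_nhdsWithin] with x hx
        simp only [Set.mem_Iio] at hx
        simp only [Set.mem_Ioi]
        linarith
    have hInvL : Filter.Tendsto (fun r : ℝ => (r - z)⁻¹) (nhdsWithin z (Set.Iio z))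
        Filter.atBot := by
      have h2 := tendsto_neg_atTop_atBot.comp (tendsto_inv_nhdsGT_zero.comp h1)
      have h3 : (fun r : ℝ => -(z - r)⁻¹) = fun r : ℝ => (r - z)⁻¹ := by
        funext r
        rw [← inv_neg, neg_sub]
      rw [show ((fun x : ℝ => -x) ∘ (fun x : ℝ => x⁻¹) ∘ (fun r : ℝ => z - r))
        = fun r : ℝ => -(z - r)⁻¹ from rfl, h3] at h2
      exact h2
    have hcomb := Filter.Tendsto.pos_mul_atBot hz (hG.mono_left hmono) hInvL
    apply hcomb.congr'
    filter_upwards [self_mem_nhdsWithin] with r hr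
    exact (keyeq r (ne_of_lt hr)).symm
  · have hmono : nhdsWithin z (Set.Ioi z) ≤ nhdsWithin z {z}ᶜ :=
      nhdsWithin_mono z (fun x hx => ne_of_gt hx)
    have h1 : Filter.Tendsto (fun r : ℝ => r - z) (nhdsWithin z (Set.Ioi z))
        (nhdsWithin 0 (Set.Ioi 0)) := by
      apply tendsto_nhdsWithin_of_tendsto_nhds_of_eventually_within
      · have : Filter.Tendsto (fun r : ℝ => r - z) (nhds z) (nhds (z - z)) :=
          (continuous_id.sub continuous_const).tendsto z
        rw [sub_self] at this
        exact this.mono_left nhdsWithin_le_nhds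
      · filter_upwards [self_mem_nhdsWithin] with x hx
        simp only [Set.mem_Ioi] at hx
        simp only [Set.mem_Ioi]
        linarith
    have hInvR : Filter.Tendsto (fun r : ℝ => (r - z)⁻¹) (nhdsWithin z (Set.Ioi z))
        Filter.atTop := tendsto_inv_nhdsGT_zero.comp h1
    have hcomb := Filter.Tendsto.pos_mul_atTop hz (hG.mono_left hmono) hInvR
    apply hcomb.congr'
    filter_upwards [self_mem_nhdsWithin] with r hr
    exact (keyeq r (ne_of_gt hr)).symm
end
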